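/- Let M, N ≥ 1, let U be a unitary matrix on ℂ^M ⊗ ℂ^N, let H be an N×N complex matrix, and let a > 0, h ∈ ℝ, ε ≥ 0 be such that ‖H − a·Ũ‖ ≤ ε, where Ũ = (⟨e₀| ⊗ I_N)·U·(|e₀⟩ ⊗ I_N) is the top-left N×N block of U. Then there exists a unitary matrix V on ℂ² ⊗ ℂ^M ⊗ ℂ^N such that ‖(H − h·I_N) − (a + |h|)·Ṽ‖ ≤ ε, where Ṽ = (⟨e₀| ⊗ ⟨e₀| ⊗ I_N)·V·(|e₀⟩ ⊗ |e₀⟩ ⊗ I_N). -/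

import Mathlib

set_option autoImplicit false

open scoped Matrix.Norms.L2Operator

open Matrix Kronecker in
private lemma kron_conjTranspose {m n : Type*} (A : Matrix m m ℂ) (B : Matrix n n ℂ) :
    (A ⊗ₖ B)ᴴ = Aᴴ ⊗ₖ Bᴴ := by
  ext ⟨i, p⟩ ⟨j, q⟩
  simp [Matrix.conjTranspose_apply, mul_comm]

open Matrix in
private lemma reindex_mem_unitaryGroup {m n : Type*} [Fintype m] [Fintype n]
    [DecidableEq m] [DecidableEq n] (e : m ≃ n) (A : Matrix m m ℂ)
    (hA : A ∈ Matrix.unitaryGroup m ℂ) :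
    (Matrix.reindex e e A) ∈ Matrix.unitaryGroup n ℂ := by
  rw [Matrix.mem_unitaryGroup_iff]
  have : star (Matrix.reindex e e A) = Matrix.reindex e e (star A) := by
    simp [Matrix.star_eq_conjTranspose, Matrix.conjTranspose_reindex]
  rw [this, Matrix.reindex_apply, Matrix.reindex_apply, Matrix.submatrix_mul_equiv,
    Matrix.mem_unitaryGroup_iff.mp hA, Matrix.submatrix_one_equiv]

private lemma rot_unitary (c s : ℝ) (hcsC : (c : ℂ) ^ 2 + (s : ℂ) ^ 2 = 1) :
    !![(c : ℂ), -(s : ℂ); (s : ℂ), (c : ℂ)] ∈ Matrix.unitaryGroup (Fin 2) ℂ := by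
  rw [Matrix.mem_unitaryGroup_iff']
  ext i j
  fin_cases i <;> fin_cases j <;>
    simp [Matrix.mul_apply, Fin.sum_univ_two, Matrix.conjTranspose_apply, Matrix.one_apply] <;>
    first | ring1 | linear_combination hcsC

/-- **QSHIFT.** If a unitary `U` on `ℂ^M ⊗ ℂ^N` block-encodes `H` with
normalization `a` and error `ε ` (i.e. `‖H - a·Ũ‖ ≤ ε`, where `Ũ` is the compression of
`U` onto the ancilla basis state `e₀`), then for any shift `h ∈ ℝ` there is a unitary
`V` on `ℂ² ⊗ ℂ^M ⊗ ℂ^N` block-encoding `H - h·I` with normalization `a + |h|` and the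
same error `ε`. -/
theorem block_encoding_shift (M N : ℕ) [NeZero M]
    (U : Matrix (Fin M × Fin N) (Fin M × Fin N) ℂ)
    (hU : U ∈ Matrix.unitaryGroup (Fin M × Fin N) ℂ)
    (H : Matrix (Fin N) (Fin N) ℂ) (a : ℝ) (ha : 0 < a) (h : ℝ) (ε : ℝ) (hε : 0 ≤ ε)
    (henc : ‖H - (a : ℂ) • Matrix.of (fun j k : Fin N => U (0, j) (0, k))‖ ≤ ε) :
    ∃ V : Matrix (Fin 2 × Fin M × Fin N) (Fin 2 × Fin M × Fin N) ℂ,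
      V ∈ Matrix.unitaryGroup (Fin 2 × Fin M × Fin N) ℂ ∧
      ‖(H - (h : ℂ) • 1) -
          ((a + |h| : ℝ) : ℂ) • Matrix.of (fun j k : Fin N => V (0, 0, j) (0, 0, k))‖
        ≤ ε := by
  classical
  open Matrix Kronecker in
  set t : ℝ := a + |h| with ht_def
  have ht : 0 < t := by positivity
  set c : ℝ := Real.sqrt (a / t) with hc_def
  set s : ℝ := Real.sqrt (|h| / t) with hs_def
  have hc2 : c ^ 2 = a / t := Real.sq_sqrt (by positivity)
  have hs2 : s ^ 2 = |h| / t := Real.sq_sqrt (by positivity)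
  have hcs : c ^ 2 + s ^ 2 = 1 := by
    rw [hc2, hs2, ← add_div, ht_def, div_self ht.ne']
  set σ : ℂ := if 0 ≤ h then -1 else 1 with hσ_def
  have hσ2 : σ * σ = 1 := by by_cases h0 : 0 ≤ h <;> simp [hσ_def, h0]
  have hhσ : ((|h| : ℝ) : ℂ) * σ = -(h : ℂ) := by
    by_cases h0 : 0 ≤ h
    · simp [hσ_def, h0, abs_of_nonneg h0]
    · simp [hσ_def, h0, abs_of_neg (lt_of_not_ge h0)]
  -- the rotation
  set W : Matrix (Fin 2) (Fin 2) ℂ := !![(c : ℂ), -(s : ℂ); (s : ℂ), (c : ℂ)] with hW_def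
  have hcsC : (c : ℂ) ^ 2 + (s : ℂ) ^ 2 = 1 := by
    rw [← Complex.ofReal_pow, ← Complex.ofReal_pow, ← Complex.ofReal_add, hcs,
      Complex.ofReal_one]
  have hW : W ∈ Matrix.unitaryGroup (Fin 2) ℂ := rot_unitary c s hcsC
  set A : Matrix (Fin 2 × Fin M × Fin N) (Fin 2 × Fin M × Fin N) ℂ :=
    W ⊗ₖ (1 : Matrix (Fin M × Fin N) (Fin M × Fin N) ℂ) with hA_def
  have hA : A ∈ Matrix.unitaryGroup (Fin 2 × Fin M × Fin N) ℂ := by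
    rw [Matrix.mem_unitaryGroup_iff']
    rw [hA_def, Matrix.star_eq_conjTranspose, kron_conjTranspose,
      ← Matrix.mul_kronecker_mul]
    rw [← Matrix.star_eq_conjTranspose, Matrix.mem_unitaryGroup_iff'.mp hW]
    simp [Matrix.one_kronecker_one]
  set d : Fin 2 → Matrix (Fin M × Fin N) (Fin M × Fin N) ℂ :=
    fun i => if i = 0 then U else σ • 1 with hd_def
  set e : (Fin M × Fin N) × Fin 2 ≃ Fin 2 × Fin M × Fin N := Equiv.prodComm _ _ with he_def
  set D : Matrix (Fin 2 × Fin M × Fin N) (Fin 2 × Fin M × Fin N) ℂ :=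
    Matrix.reindex e e (Matrix.blockDiagonal d) with hD_def
  have hσstar : star σ = σ := by by_cases h0 : 0 ≤ h <;> simp [hσ_def, h0]
  have hDu : D ∈ Matrix.unitaryGroup (Fin 2 × Fin M × Fin N) ℂ := by
    apply reindex_mem_unitaryGroup
    rw [Matrix.mem_unitaryGroup_iff', Matrix.star_eq_conjTranspose,
      Matrix.blockDiagonal_conjTranspose, ← Matrix.blockDiagonal_mul]
    have hdd : (fun k => (d k)ᴴ * d k) =
        (1 : Fin 2 → Matrix (Fin M × Fin N) (Fin M × Fin N) ℂ) := by
      funext i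
      fin_cases i
      · simpa [hd_def, Matrix.star_eq_conjTranspose] using Matrix.mem_unitaryGroup_iff'.mp hU
      · show ((σ • 1 : Matrix (Fin M × Fin N) (Fin M × Fin N) ℂ))ᴴ * (σ • 1) = _
        rw [Matrix.conjTranspose_smul, Matrix.conjTranspose_one, smul_mul_smul_comm,
          one_mul, hσstar, hσ2, one_smul]
        rfl
    rw [hdd, Matrix.blockDiagonal_one]
  refine ⟨star A * D * A, ?_, ?_⟩
  · exact mul_mem (mul_mem (Unitary.star_mem hA) hDu) hA
  · -- compute the compressed block
    have hblock : Matrix.of (fun j k : Fin N => (star A * D * A) (0, 0, j) (0, 0, k)) =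
        ((c : ℂ) ^ 2) • Matrix.of (fun j k : Fin N => U (0, j) (0, k)) +
          (((s : ℂ) ^ 2) * σ) • (1 : Matrix (Fin N) (Fin N) ℂ) := by
      have hAapp : ∀ (i : Fin 2) (x : Fin M × Fin N) (l : Fin 2) (y : Fin M × Fin N),
          A (i, x) (l, y) = W i l * (if x = y then 1 else 0) := by
        intro i x l y
        simp [hA_def, Matrix.one_apply]
      have hDapp : ∀ (i : Fin 2) (x : Fin M × Fin N) (l : Fin 2) (y : Fin M × Fin N),
          D (i, x) (l, y) = if i = l then d i x y else 0 := by
        intro i x l y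
        simp [hD_def, he_def, Matrix.blockDiagonal_apply]
      ext j k
      have hDA : ∀ (i : Fin 2) (x : Fin M × Fin N),
          (D * A) (i, x) (0, (0, k)) = d i x (0, k) * W i 0 := by
        intro i x
        rw [Matrix.mul_apply, Fintype.sum_prod_type]
        simp only [hDapp, hAapp, ite_mul, mul_ite, mul_one, mul_zero, zero_mul,
          Finset.sum_ite_eq, Finset.sum_ite_irrel, Finset.sum_const_zero,
          Finset.mem_univ, if_true]
        rw [Fin.sum_univ_two]
        fin_cases i <;> simp
      have hmain : (star A * D * A) (0, (0, j)) (0, (0, k)) =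
          (c : ℂ) * (c : ℂ) * U (0, j) (0, k) +
            (s : ℂ) * (s : ℂ) * (σ * (if j = k then 1 else 0)) := by
        have hW00 : W 0 0 = (c : ℂ) := by simp [hW_def]
        have hW10 : W 1 0 = (s : ℂ) := by simp [hW_def]
        have hd0 : d 0 = U := by simp [hd_def]
        have hd1 : d 1 = σ • (1 : Matrix (Fin M × Fin N) (Fin M × Fin N) ℂ) := by
          simp [hd_def]
        rw [mul_assoc, Matrix.mul_apply, Fintype.sum_prod_type]
        simp only [Matrix.star_apply, hAapp, hDA, star_mul']
        rw [Fin.sum_univ_two, hW00, hW10, hd0, hd1]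
        simp only [apply_ite (star : ℂ → ℂ), star_one, star_zero, Complex.star_def,
          Complex.conj_ofReal, ite_mul, mul_ite, one_mul, zero_mul, mul_zero, mul_one,
          Finset.sum_ite_eq', Finset.mem_univ, if_true, Matrix.smul_apply, Matrix.one_apply,
          smul_eq_mul, Prod.mk.injEq, true_and]
        by_cases hjk : j = k
        · subst hjk
          simp only [if_pos rfl]
          ring
        · rw [if_neg (fun hh => hjk hh.symm), if_neg hjk]
          ring
      simp only [Matrix.of_apply, Matrix.add_apply, Matrix.smul_apply, Matrix.one_apply,
        smul_eq_mul]
      rw [hmain]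
      ring
    rw [hblock]
    have hexpand : (H - (h : ℂ) • 1) -
        ((t : ℝ) : ℂ) • (((c : ℂ) ^ 2) • Matrix.of (fun j k : Fin N => U (0, j) (0, k)) +
          (((s : ℂ) ^ 2) * σ) • (1 : Matrix (Fin N) (Fin N) ℂ)) =
        H - (a : ℂ) • Matrix.of (fun j k : Fin N => U (0, j) (0, k)) := by
      have h1 : ((t : ℝ) : ℂ) * (c : ℂ) ^ 2 = (a : ℂ) := by
        rw [← Complex.ofReal_pow, ← Complex.ofReal_mul, hc2, mul_div_cancel₀ _ ht.ne']
      have h2 : ((t : ℝ) : ℂ) * ((s : ℂ) ^ 2 * σ) = -(h : ℂ) := by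
        rw [← Complex.ofReal_pow, ← mul_assoc, ← Complex.ofReal_mul, hs2,
          mul_div_cancel₀ _ ht.ne', hhσ]
      rw [smul_add, smul_smul, smul_smul, h1, h2]
      module
    rw [hexpand]
    exact henc
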